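/- Let a < b < c < d be real numbers, write s = d+c-a-b, let θ_l, θ_r ∈ [0,1], α ∈ (0,1), and set k = α·θ_l − (1-α)·θ_r, V(x) = (x-a)²/(s(b-a)), L(x) = (2x-a-b)/s, W(x) = (d-x)²/(s(d-c)). Define F : ℝ → ℝ by F(x) = 0 for x ≤ a; F(x) = V(x) − k·V(x) for a < x ≤ a + (b-a)/√2; F(x) = V(x) − k·((b-a)/s − V(x)) for a + (b-a)/√2 ≤ x < b; F(b) = (b-a)/s; F(x) = L(x) − k·(L(x) − (b-a)/s) for b < x ≤ (b+c)/2; F(x) = L(x) − k·((2c-a-b)/s − L(x)) for (b+c)/2 ≤ x < c; F(c) = (2c-a-b)/s; F(x) = 1 − W(x) − k·((d-c)/s − W(x)) for c < x ≤ d − (d-c)/√2; F(x) = 1 − W(x) − k·W(x) for d − (d-c)/√2 ≤ x < d; F(x) = 1 for x ≥ d. Then F is monotone increasing on ℝ (i.e., x ≤ y implies F(x) ≤ F(y)). -/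

import Mathlib

/-- `V(x) = (x-a)²/(s(b-a))` where `s = d+c-a-b`. -/
noncomputable def Vtrap (a b c d x : ℝ) : ℝ := (x - a) ^ 2 / ((d + c - a - b) * (b - a))

/-- `L(x) = (2x-a-b)/s` where `s = d+c-a-b`. -/
noncomputable def Ltrap (a b c d x : ℝ) : ℝ := (2 * x - a - b) / (d + c - a - b)

/-- `W(x) = (d-x)²/(s(d-c))` where `s = d+c-a-b`. -/
noncomputable def Wtrap (a b c d x : ℝ) : ℝ := (d - x) ^ 2 / ((d + c - a - b) * (d - c))

/-- The reduced single-fold uncertainty distribution, via the α-optimistic value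
criterion with `k = α·θ_l − (1-α)·θ_r`, of the trapezoidal two-fold uncertain
variable with parameters `a < b < c < d`. -/
noncomputable def trapReduced (a b c d k : ℝ) (x : ℝ) : ℝ :=
  if x ≤ a then 0
  else if x ≤ a + (b - a) / Real.sqrt 2 then Vtrap a b c d x - k * Vtrap a b c d x
  else if x < b then
    Vtrap a b c d x - k * ((b - a) / (d + c - a - b) - Vtrap a b c d x)
  else if x = b then (b - a) / (d + c - a - b)
  else if x ≤ (b + c) / 2 then
    Ltrap a b c d x - k * (Ltrap a b c d x - (b - a) / (d + c - a - b))
  else if x < c then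
    Ltrap a b c d x - k * ((2 * c - a - b) / (d + c - a - b) - Ltrap a b c d x)
  else if x = c then (2 * c - a - b) / (d + c - a - b)
  else if x ≤ d - (d - c) / Real.sqrt 2 then
    1 - Wtrap a b c d x - k * ((d - c) / (d + c - a - b) - Wtrap a b c d x)
  else if x < d then 1 - Wtrap a b c d x - k * Wtrap a b c d x
  else 1

private lemma fracMono {N M D : ℝ} (hD : 0 < D) (h : N ≤ M) : N / D ≤ M / D := by
  gcongr

private lemma glue_mono {F : ℝ → ℝ} {p m q : ℝ}
    (h1 : ∀ x y, p ≤ x → x ≤ y → y ≤ m → F x ≤ F y)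
    (h2 : ∀ x y, m ≤ x → x ≤ y → y ≤ q → F x ≤ F y) :
    ∀ x y, p ≤ x → x ≤ y → y ≤ q → F x ≤ F y := by
  intro x y hx hxy hy
  rcases le_total y m with h | h
  · exact h1 x y hx hxy h
  rcases le_total x m with h' | h'
  · exact le_trans (h1 x m hx h' le_rfl) (h2 m y le_rfl h hy)
  · exact h2 x y h' hxy hy

set_option maxHeartbeats 2000000 in
theorem trapMonoAux (a b c d k : ℝ) (hab : a < b) (hbc : b < c) (hcd : c < d)
    (hk1 : -1 ≤ k) (hk2 : k ≤ 1) :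
    ∀ x y : ℝ, x ≤ y → trapReduced a b c d k x ≤ trapReduced a b c d k y := by
  have hs : 0 < d + c - a - b := by linarith
  have hba : 0 < b - a := by linarith
  have hdc : 0 < d - c := by linarith
  have hr0 : (0:ℝ) ≤ Real.sqrt 2 := Real.sqrt_nonneg 2
  have hr2 : Real.sqrt 2 ^ 2 = 2 := Real.sq_sqrt (by norm_num)
  have hr1 : 1 < Real.sqrt 2 := by nlinarith
  have hm1a : a < a + (b - a) / Real.sqrt 2 := by
    have : 0 < (b - a) / Real.sqrt 2 := div_pos hba (by linarith)
    linarith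
  have hm1b : a + (b - a) / Real.sqrt 2 < b := by
    have : (b - a) / Real.sqrt 2 < b - a := by
      rw [div_lt_iff₀ (by linarith : (0:ℝ) < Real.sqrt 2)]
      nlinarith
    linarith
  have hm3c : c < d - (d - c) / Real.sqrt 2 := by
    have : (d - c) / Real.sqrt 2 < d - c := by
      rw [div_lt_iff₀ (by linarith : (0:ℝ) < Real.sqrt 2)]
      nlinarith
    linarith
  have hm3d : d - (d - c) / Real.sqrt 2 < d := by
    have : 0 < (d - c) / Real.sqrt 2 := div_pos hdc (by linarith)
    linarith
  have hq1 : ((b - a) / Real.sqrt 2) ^ 2 = (b - a) ^ 2 / 2 := by rw [div_pow, hr2]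
  have hq3 : ((d - c) / Real.sqrt 2) ^ 2 = (d - c) ^ 2 / 2 := by rw [div_pow, hr2]
  have hD1 : 0 < (d + c - a - b) * (b - a) := mul_pos hs hba
  have hD2 : 0 < (d + c - a - b) * (d - c) := mul_pos hs hdc
  -- raw value lemmas
  have v1 : ∀ z, z ≤ a → trapReduced a b c d k z = 0 := by
    intro z hz
    simp only [trapReduced]
    rw [if_pos hz]
  have v2 : ∀ z, a < z → z ≤ a + (b - a) / Real.sqrt 2 →
      trapReduced a b c d k z = ((1 - k) * (z - a) ^ 2) / ((d + c - a - b) * (b - a)) := by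
    intro z h1 h2
    simp only [trapReduced, Vtrap]
    rw [if_neg (not_le.mpr h1), if_pos h2]
    ring
  have v3 : ∀ z, a + (b - a) / Real.sqrt 2 < z → z < b →
      trapReduced a b c d k z
        = ((1 + k) * (z - a) ^ 2 - k * (b - a) ^ 2) / ((d + c - a - b) * (b - a)) := by
    intro z h1 h2
    simp only [trapReduced, Vtrap]
    rw [if_neg (not_le.mpr (by linarith)), if_neg (not_le.mpr h1), if_pos h2]
    field_simp
    ring
  have v4 : trapReduced a b c d k b = (b - a) ^ 2 / ((d + c - a - b) * (b - a)) := by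
    simp only [trapReduced]
    rw [if_neg (not_le.mpr hab), if_neg (not_le.mpr hm1b), if_neg (lt_irrefl b), if_pos trivial]
    field_simp
  have v4' : trapReduced a b c d k b = (b - a) / (d + c - a - b) := by
    simp only [trapReduced]
    rw [if_neg (not_le.mpr hab), if_neg (not_le.mpr hm1b), if_neg (lt_irrefl b), if_pos trivial]
  have v5 : ∀ z, b < z → z ≤ (b + c) / 2 →
      trapReduced a b c d k z
        = ((1 - k) * (2 * z - a - b) + k * (b - a)) / (d + c - a - b) := by
    intro z h1 h2
    simp only [trapReduced, Ltrap]
    rw [if_neg (not_le.mpr (by linarith)), if_neg (not_le.mpr (by linarith)),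
      if_neg (not_lt.mpr (le_of_lt h1)), if_neg (ne_of_gt h1),
      if_pos h2]
    field_simp
    ring
  have v6 : ∀ z, (b + c) / 2 < z → z < c →
      trapReduced a b c d k z
        = ((1 + k) * (2 * z - a - b) - k * (2 * c - a - b)) / (d + c - a - b) := by
    intro z h1 h2
    have hbz : b < z := by linarith
    simp only [trapReduced, Ltrap]
    rw [if_neg (not_le.mpr (by linarith)), if_neg (not_le.mpr (by linarith)),
      if_neg (not_lt.mpr (le_of_lt hbz)), if_neg (ne_of_gt hbz),
      if_neg (not_le.mpr h1), if_pos h2]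
    field_simp
    ring
  have v7 : trapReduced a b c d k c = (2 * c - a - b) / (d + c - a - b) := by
    simp only [trapReduced]
    rw [if_neg (not_le.mpr (by linarith)), if_neg (not_le.mpr (by linarith)),
      if_neg (not_lt.mpr (le_of_lt hbc)), if_neg (ne_of_gt hbc),
      if_neg (not_le.mpr (by linarith)), if_neg (lt_irrefl c), if_pos trivial]
  have v8 : ∀ z, c < z → z ≤ d - (d - c) / Real.sqrt 2 →
      trapReduced a b c d k z
        = ((d + c - a - b) * (d - c) - (1 - k) * (d - z) ^ 2 - k * (d - c) ^ 2)
            / ((d + c - a - b) * (d - c)) := by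
    intro z h1 h2
    have hbz : b < z := by linarith
    simp only [trapReduced, Wtrap]
    rw [if_neg (not_le.mpr (by linarith)), if_neg (not_le.mpr (by linarith)),
      if_neg (not_lt.mpr (le_of_lt hbz)), if_neg (ne_of_gt hbz),
      if_neg (not_le.mpr (by linarith)), if_neg (not_lt.mpr (le_of_lt h1)),
      if_neg (ne_of_gt h1), if_pos h2]
    field_simp
    ring
  have v9 : ∀ z, d - (d - c) / Real.sqrt 2 < z → z < d →
      trapReduced a b c d k z
        = ((d + c - a - b) * (d - c) - (1 + k) * (d - z) ^ 2)
            / ((d + c - a - b) * (d - c)) := by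
    intro z h1 h2
    have hcz : c < z := by linarith
    have hbz : b < z := by linarith
    simp only [trapReduced, Wtrap]
    rw [if_neg (not_le.mpr (by linarith)), if_neg (not_le.mpr (by linarith)),
      if_neg (not_lt.mpr (le_of_lt hbz)), if_neg (ne_of_gt hbz),
      if_neg (not_le.mpr (by linarith)), if_neg (not_lt.mpr (le_of_lt hcz)),
      if_neg (ne_of_gt hcz), if_neg (not_le.mpr h1), if_pos h2]
    field_simp
    ring
  have v10 : ∀ z, d ≤ z → trapReduced a b c d k z = 1 := by
    intro z hz
    have hbz : b < z := by linarith
    have hcz : c < z := by linarith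
    simp only [trapReduced]
    rw [if_neg (not_le.mpr (by linarith)), if_neg (not_le.mpr (by linarith)),
      if_neg (not_lt.mpr (le_of_lt hbz)), if_neg (ne_of_gt hbz),
      if_neg (not_le.mpr (by linarith)), if_neg (not_lt.mpr (le_of_lt hcz)),
      if_neg (ne_of_gt hcz),
      if_neg (not_le.mpr (by linarith)), if_neg (not_lt.mpr hz)]
  -- uniform closed forms on each closed piece
  have vA : ∀ z, a ≤ z → z ≤ a + (b - a) / Real.sqrt 2 →
      trapReduced a b c d k z = ((1 - k) * (z - a) ^ 2) / ((d + c - a - b) * (b - a)) := by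
    intro z h1 h2
    rcases lt_or_eq_of_le h1 with h | h
    · exact v2 z h h2
    · rw [← h, v1 a le_rfl]
      simp
  have vB : ∀ z, a + (b - a) / Real.sqrt 2 ≤ z → z ≤ b →
      trapReduced a b c d k z
        = ((1 + k) * (z - a) ^ 2 - k * (b - a) ^ 2) / ((d + c - a - b) * (b - a)) := by
    intro z h1 h2
    rcases lt_or_eq_of_le h2 with h | h
    · rcases lt_or_eq_of_le h1 with h' | h'
      · exact v3 z h' h
      · rw [← h', v2 _ hm1a le_rfl,
          show a + (b - a) / Real.sqrt 2 - a = (b - a) / Real.sqrt 2 from by ring, hq1]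
        ring
    · rw [h, v4]
      ring
  have vC : ∀ z, b ≤ z → z ≤ (b + c) / 2 →
      trapReduced a b c d k z
        = ((1 - k) * (2 * z - a - b) + k * (b - a)) / (d + c - a - b) := by
    intro z h1 h2
    rcases lt_or_eq_of_le h1 with h | h
    · exact v5 z h h2
    · rw [← h, v4']
      ring
  have vD : ∀ z, (b + c) / 2 ≤ z → z ≤ c →
      trapReduced a b c d k z
        = ((1 + k) * (2 * z - a - b) - k * (2 * c - a - b)) / (d + c - a - b) := by
    intro z h1 h2
    rcases lt_or_eq_of_le h2 with h | h
    · rcases lt_or_eq_of_le h1 with h' | h'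
      · exact v6 z h' h
      · rw [← h', v5 _ (by linarith) le_rfl]
        ring
    · rw [h, v7]
      ring
  have vE : ∀ z, c ≤ z → z ≤ d - (d - c) / Real.sqrt 2 →
      trapReduced a b c d k z
        = ((d + c - a - b) * (d - c) - (1 - k) * (d - z) ^ 2 - k * (d - c) ^ 2)
            / ((d + c - a - b) * (d - c)) := by
    intro z h1 h2
    rcases lt_or_eq_of_le h1 with h | h
    · exact v8 z h h2
    · rw [← h, v7]
      field_simp
      ring
  have vF : ∀ z, d - (d - c) / Real.sqrt 2 ≤ z → z ≤ d →
      trapReduced a b c d k z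
        = ((d + c - a - b) * (d - c) - (1 + k) * (d - z) ^ 2)
            / ((d + c - a - b) * (d - c)) := by
    intro z h1 h2
    rcases lt_or_eq_of_le h2 with h | h
    · rcases lt_or_eq_of_le h1 with h' | h'
      · exact v9 z h' h
      · rw [← h', v8 _ hm3c le_rfl,
          show d - (d - (d - c) / Real.sqrt 2) = (d - c) / Real.sqrt 2 from by ring, hq3]
        ring
    · rw [h, v10 d le_rfl]
      field_simp
      ring
  -- monotone on each piece
  have sq_mono : ∀ u v w : ℝ, u ≤ v → v ≤ w → (v - u) ^ 2 ≤ (w - u) ^ 2 := by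
    intro u v w h1 h2
    nlinarith [mul_nonneg (sub_nonneg.mpr h2) (by linarith : (0:ℝ) ≤ w + v - 2 * u)]
  have sq_mono' : ∀ u v w : ℝ, v ≤ w → w ≤ u → (u - w) ^ 2 ≤ (u - v) ^ 2 := by
    intro u v w h1 h2
    nlinarith [mul_nonneg (sub_nonneg.mpr h1) (by linarith : (0:ℝ) ≤ 2 * u - v - w)]
  have pA : ∀ x y, a ≤ x → x ≤ y → y ≤ a + (b - a) / Real.sqrt 2 →
      trapReduced a b c d k x ≤ trapReduced a b c d k y := by
    intro x y hx hxy hy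
    rw [vA x hx (le_trans hxy hy), vA y (le_trans hx hxy) hy]
    apply fracMono hD1
    nlinarith [mul_nonneg (by linarith : (0:ℝ) ≤ 1 - k) (sub_nonneg.mpr (sq_mono a x y hx hxy))]
  have pB : ∀ x y, a + (b - a) / Real.sqrt 2 ≤ x → x ≤ y → y ≤ b →
      trapReduced a b c d k x ≤ trapReduced a b c d k y := by
    intro x y hx hxy hy
    rw [vB x hx (le_trans hxy hy), vB y (le_trans hx hxy) hy]
    apply fracMono hD1
    have hax : a ≤ x := by linarith
    nlinarith [mul_nonneg (by linarith : (0:ℝ) ≤ 1 + k) (sub_nonneg.mpr (sq_mono a x y hax hxy))]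
  have pC : ∀ x y, b ≤ x → x ≤ y → y ≤ (b + c) / 2 →
      trapReduced a b c d k x ≤ trapReduced a b c d k y := by
    intro x y hx hxy hy
    rw [vC x hx (le_trans hxy hy), vC y (le_trans hx hxy) hy]
    apply fracMono hs
    nlinarith [mul_nonneg (by linarith : (0:ℝ) ≤ 1 - k) (by linarith : (0:ℝ) ≤ y - x)]
  have pD : ∀ x y, (b + c) / 2 ≤ x → x ≤ y → y ≤ c →
      trapReduced a b c d k x ≤ trapReduced a b c d k y := by
    intro x y hx hxy hy
    rw [vD x hx (le_trans hxy hy), vD y (le_trans hx hxy) hy]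
    apply fracMono hs
    nlinarith [mul_nonneg (by linarith : (0:ℝ) ≤ 1 + k) (by linarith : (0:ℝ) ≤ y - x)]
  have pE : ∀ x y, c ≤ x → x ≤ y → y ≤ d - (d - c) / Real.sqrt 2 →
      trapReduced a b c d k x ≤ trapReduced a b c d k y := by
    intro x y hx hxy hy
    rw [vE x hx (le_trans hxy hy), vE y (le_trans hx hxy) hy]
    apply fracMono hD2
    have hyd : y ≤ d := by linarith
    nlinarith [mul_nonneg (by linarith : (0:ℝ) ≤ 1 - k)
      (sub_nonneg.mpr (sq_mono' d x y hxy hyd))]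
  have pF : ∀ x y, d - (d - c) / Real.sqrt 2 ≤ x → x ≤ y → y ≤ d →
      trapReduced a b c d k x ≤ trapReduced a b c d k y := by
    intro x y hx hxy hy
    rw [vF x hx (le_trans hxy hy), vF y (le_trans hx hxy) hy]
    apply fracMono hD2
    nlinarith [mul_nonneg (by linarith : (0:ℝ) ≤ 1 + k)
      (sub_nonneg.mpr (sq_mono' d x y hxy hy))]
  have chain : ∀ x y, a ≤ x → x ≤ y → y ≤ d →
      trapReduced a b c d k x ≤ trapReduced a b c d k y :=
    glue_mono (glue_mono (glue_mono (glue_mono (glue_mono pA pB) pC) pD) pE) pF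
  -- global
  intro x y hxy
  rcases le_total x a with hx | hx
  · rw [v1 x hx]
    rcases le_total y a with hy | hy
    · rw [v1 y hy]
    · rcases le_total y d with hy2 | hy2
      · have h := chain a y le_rfl hy hy2
        rwa [v1 a le_rfl] at h
      · rw [v10 y hy2]
        norm_num
  · rcases le_total d y with hy | hy
    · rw [v10 y hy]
      rcases le_total d x with hx2 | hx2
      · rw [v10 x hx2]
      · have h := chain x d hx hx2 le_rfl
        rwa [v10 d le_rfl] at h
    · exact chain x y hx hxy hy

theorem trapReduced_monotone (a b c d θl θr α : ℝ) (hab : a < b) (hbc : b < c)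
    (hcd : c < d)
    (hθl : θl ∈ Set.Icc (0 : ℝ) 1) (hθr : θr ∈ Set.Icc (0 : ℝ) 1)
    (hα : α ∈ Set.Ioo (0 : ℝ) 1) :
    ∀ x y : ℝ, x ≤ y →
      trapReduced a b c d (α * θl - (1 - α) * θr) x
        ≤ trapReduced a b c d (α * θl - (1 - α) * θr) y := by
  obtain ⟨hl0, hl1⟩ := hθl
  obtain ⟨hr0', hr1'⟩ := hθr
  obtain ⟨ha0, ha1⟩ := hα
  apply trapMonoAux a b c d _ hab hbc hcd
  · nlinarith
  · nlinarith
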